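/- arXiv:1305.0339 — 3 statements merged into one kernel-verified Lean document; each statement's English description precedes it below -/
import Mathlib

section
/- Let c > 0, z ∈ ℂ, let G and F be probability measures on ℝ, and let u, v be nonzero complex numbers such that t + u ≠ 0 G-almost everywhere, t + v ≠ 0 for G- and F-almost every t, the integrals below exist, and z = −1/u + c ∫ (t+u)^{-1} dG(t) and z = −1/v + c ∫ (t+v)^{-1} dF(t). If D := 1 − c·u·v·∫ ((t+u)(t+v))^{-1} dG(t) ≠ 0, then u − v = −c·u·v·[ ∫ (t+v)^{-1} dG(t) − ∫ (t+v)^{-1} dF(t) ] / D. -/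
open MeasureTheory

/-- Deterministic identity behind display (2.7): if `u`, `v` are nonzero complex numbers
satisfying the self-consistent equations `z = −1/u + c ∫ (t+u)⁻¹ dG(t)` and
`z = −1/v + c ∫ (t+v)⁻¹ dF(t)`, and `D = 1 − c u v ∫ ((t+u)(t+v))⁻¹ dG(t) ≠ 0`, then
`u − v = −c u v [∫ (t+v)⁻¹ dG(t) − ∫ (t+v)⁻¹ dF(t)] / D`. -/
theorem stieltjes_difference_identity (c : ℝ) (hc : 0 < c) (z : ℂ)
    (G F : Measure ℝ) [IsProbabilityMeasure G] [IsProbabilityMeasure F]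
    (u v : ℂ) (hu : u ≠ 0) (hv : v ≠ 0)
    (huG : ∀ᵐ (t : ℝ) ∂G, (t : ℂ) + u ≠ 0)
    (hvG : ∀ᵐ (t : ℝ) ∂G, (t : ℂ) + v ≠ 0)
    (hvF : ∀ᵐ (t : ℝ) ∂F, (t : ℂ) + v ≠ 0)
    (hintuG : Integrable (fun t : ℝ => ((t : ℂ) + u)⁻¹) G)
    (hintvG : Integrable (fun t : ℝ => ((t : ℂ) + v)⁻¹) G)
    (hintvF : Integrable (fun t : ℝ => ((t : ℂ) + v)⁻¹) F)
    (hintuvG : Integrable (fun t : ℝ => (((t : ℂ) + u) * ((t : ℂ) + v))⁻¹) G)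
    (hzu : z = -1 / u + (c : ℂ) * ∫ (t : ℝ), ((t : ℂ) + u)⁻¹ ∂G)
    (hzv : z = -1 / v + (c : ℂ) * ∫ (t : ℝ), ((t : ℂ) + v)⁻¹ ∂F)
    (D : ℂ)
    (hD : D = 1 - (c : ℂ) * u * v * ∫ (t : ℝ), (((t : ℂ) + u) * ((t : ℂ) + v))⁻¹ ∂G)
    (hD0 : D ≠ 0) :
    u - v = -(c : ℂ) * u * v *
        ((∫ (t : ℝ), ((t : ℂ) + v)⁻¹ ∂G) - ∫ (t : ℝ), ((t : ℂ) + v)⁻¹ ∂F) / D := by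
  have key : (∫ (t : ℝ), ((t : ℂ) + u)⁻¹ ∂G) - (∫ (t : ℝ), ((t : ℂ) + v)⁻¹ ∂G)
      = (v - u) * ∫ (t : ℝ), (((t : ℂ) + u) * ((t : ℂ) + v))⁻¹ ∂G := by
    rw [← integral_sub hintuG hintvG, ← integral_const_mul]
    refine integral_congr_ae ?_
    filter_upwards [huG, hvG] with t h1 h2
    field_simp
    ring
  set IG : ℂ := ∫ (t : ℝ), (((t : ℂ) + u) * ((t : ℂ) + v))⁻¹ ∂G
  set A : ℂ := ∫ (t : ℝ), ((t : ℂ) + u)⁻¹ ∂G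
  set B : ℂ := ∫ (t : ℝ), ((t : ℂ) + v)⁻¹ ∂G
  set C : ℂ := ∫ (t : ℝ), ((t : ℂ) + v)⁻¹ ∂F
  have h0 : -1 / u + (c : ℂ) * A = -1 / v + (c : ℂ) * C := by rw [← hzu, ← hzv]
  rw [eq_div_iff hD0, hD]
  field_simp at h0
  linear_combination h0 - (c : ℂ) * u * v * key
end

section
/- Fix z with Im z > 0, y > 0 and τ > 0. Let H_p (for each p) and H be probability measures on [0, τ] with H_p converging weakly to H, and let n = n(p) satisfy p/n → y as p → ∞. Suppose u_p and v_p lie in the upper half-plane and satisfy z = −1/u_p + (p/n) ∫ t/(1 + t u_p) dH_p(t) and z = −1/v_p + (p/(n−1)) ∫ t/(1 + t v_p) dH_p(t), suppose u_p → m̲ and v_p → m̲ where m̲ lies in the upper half-plane and satisfies z = −1/m̲ + y ∫ t/(1 + t m̲) dH(t), and suppose 1/m̲² − y ∫ t²/(1 + t m̲)² dH(t) ≠ 0. Then n(u_p − v_p) → [ y ∫ t/(1 + t m̲) dH(t) ] / [ 1/m̲² − y ∫ t²/(1 + t m̲)² dH(t) ] as p → ∞. -/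
open MeasureTheory Filter

namespace CTDaux

lemma one_add_ne (w : ℂ) (hw : 0 < w.im) (t : ℝ) : 1 + (t : ℂ) * w ≠ 0 := by
  intro h
  have him : (1 + (t : ℂ) * w).im = t * w.im := by simp
  have hre : (1 + (t : ℂ) * w).re = 1 + t * w.re := by simp
  rw [h] at him hre
  simp only [Complex.zero_im, Complex.zero_re] at him hre
  rcases mul_eq_zero.mp him.symm with h0 | h0
  · rw [h0] at hre; simp at hre
  · exact absurd h0 (ne_of_gt hw)

lemma im_lower' (w : ℂ) (hw : 0 < w.im) (t : ℝ) :
    |t| * w.im ≤ ‖1 + (t : ℂ) * w‖ := by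
  have h1 : |(1 + (t : ℂ) * w).im| = |t| * w.im := by
    simp [abs_mul, abs_of_pos hw]
  rw [← h1]; exact Complex.abs_im_le_norm _

lemma im_lower (w : ℂ) (hw : 0 < w.im) (t : ℝ) (ht : 0 ≤ t) :
    t * w.im ≤ ‖1 + (t : ℂ) * w‖ := by
  have := im_lower' w hw t
  rwa [abs_of_nonneg ht] at this

lemma norm_F_le (w : ℂ) (hw : 0 < w.im) (t : ℝ) :
    ‖(t : ℂ) / (1 + (t : ℂ) * w)‖ ≤ 1 / w.im := by
  rcases eq_or_ne t 0 with rfl | ht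
  · simp; positivity
  · have h2 : |t| * w.im ≤ ‖1 + (t : ℂ) * w‖ := im_lower' w hw t
    have habs : 0 < |t| := abs_pos.mpr ht
    rw [norm_div, Complex.norm_real, Real.norm_eq_abs]
    rw [div_le_div_iff₀ (lt_of_lt_of_le (by positivity) h2) hw]
    nlinarith [h2]

noncomputable def sF (w : ℂ) (hw : 0 < w.im) : BoundedContinuousFunction ℝ ℂ :=
  BoundedContinuousFunction.ofNormedAddCommGroup (fun t => (t : ℂ) / (1 + (t : ℂ) * w))
    (Continuous.div Complex.continuous_ofReal
      (continuous_const.add (Complex.continuous_ofReal.mul continuous_const))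
      (fun t => one_add_ne w hw t))
    (1 / w.im) (norm_F_le w hw)

@[simp] lemma sF_apply (w : ℂ) (hw : 0 < w.im) (t : ℝ) :
    sF w hw t = (t : ℂ) / (1 + (t : ℂ) * w) := rfl

lemma weakC {Hp : ℕ → Measure ℝ} {H : Measure ℝ}
    [∀ p, IsProbabilityMeasure (Hp p)] [IsProbabilityMeasure H]
    (hweak : ∀ g : BoundedContinuousFunction ℝ ℝ,
      Tendsto (fun p => ∫ t, g t ∂(Hp p)) atTop (nhds (∫ t, g t ∂H)))
    (g : BoundedContinuousFunction ℝ ℂ) :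
    Tendsto (fun p => ∫ t, g t ∂(Hp p)) atTop (nhds (∫ t, g t ∂H)) := by
  set gre : BoundedContinuousFunction ℝ ℝ :=
    BoundedContinuousFunction.ofNormedAddCommGroup (fun t => (g t).re)
      (Complex.continuous_re.comp g.continuous) ‖g‖
      (fun t => by
        rw [Real.norm_eq_abs]
        exact (Complex.abs_re_le_norm (g t)).trans
          (by exact g.norm_coe_le_norm t)) with hgre
  set gim : BoundedContinuousFunction ℝ ℝ :=
    BoundedContinuousFunction.ofNormedAddCommGroup (fun t => (g t).im)
      (Complex.continuous_im.comp g.continuous) ‖g‖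
      (fun t => by
        rw [Real.norm_eq_abs]
        exact (Complex.abs_im_le_norm (g t)).trans
          (by exact g.norm_coe_le_norm t)) with hgim
  have key : ∀ (μ : Measure ℝ) [IsProbabilityMeasure μ],
      ∫ t, g t ∂μ = ((∫ t, gre t ∂μ : ℝ) : ℂ) + ((∫ t, gim t ∂μ : ℝ) : ℂ) * Complex.I := by
    intro μ _
    have := integral_re_add_im (μ := μ) (f := fun t => g t) (g.integrable μ)
    rw [← this]
    norm_num [hgre, hgim]
  simp only [key]
  exact ((Complex.continuous_ofReal.tendsto _).comp (hweak gre)).add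
    (((Complex.continuous_ofReal.tendsto _).comp (hweak gim)).mul tendsto_const_nhds)

lemma tendsto_int {τ : ℝ} {Hp : ℕ → Measure ℝ} {H : Measure ℝ}
    [∀ p, IsProbabilityMeasure (Hp p)] [IsProbabilityMeasure H]
    (hHpsupp : ∀ p, Hp p (Set.Icc 0 τ)ᶜ = 0)
    (hweak : ∀ g : BoundedContinuousFunction ℝ ℝ,
      Tendsto (fun p => ∫ t, g t ∂(Hp p)) atTop (nhds (∫ t, g t ∂H)))
    (φ : ℕ → BoundedContinuousFunction ℝ ℂ) (ψ : BoundedContinuousFunction ℝ ℂ)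
    (b : ℕ → ℝ) (hb : Tendsto b atTop (nhds 0))
    (hbd : ∀ᶠ p in atTop, ∀ t ∈ Set.Icc (0:ℝ) τ, ‖φ p t - ψ t‖ ≤ b p) :
    Tendsto (fun p => ∫ t, φ p t ∂(Hp p)) atTop (nhds (∫ t, ψ t ∂H)) := by
  have h1 : Tendsto (fun p => ∫ t, (φ p t - ψ t) ∂(Hp p)) atTop (nhds 0) := by
    apply squeeze_zero_norm' ?_ hb
    filter_upwards [hbd] with p hp
    have hae : ∀ᵐ t ∂ (Hp p), t ∈ Set.Icc (0:ℝ) τ := by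
      rw [ae_iff]; exact hHpsupp p
    have := norm_integral_le_of_norm_le_const (μ := Hp p)
      (f := fun t => φ p t - ψ t) (C := b p) (hae.mono fun t ht => hp t ht)
    simpa using this
  have h2 := weakC hweak ψ
  have h3 := h1.add h2
  rw [zero_add] at h3
  refine h3.congr fun p => ?_
  rw [integral_sub ((φ p).integrable _) (ψ.integrable _)]
  ring

lemma lower (m : ℂ) (hm : 0 < m.im) (τ : ℝ) :
    ∃ ε > 0, ∃ c > 0, ∀ w : ℂ, ‖w - m‖ ≤ ε →
      (m.im / 2 ≤ w.im ∧ ∀ t ∈ Set.Icc (0:ℝ) τ, c ≤ ‖1 + (t : ℂ) * w‖) := by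
  have hm1 : (0:ℝ) < ‖m‖ + 1 := by positivity
  set δ : ℝ := 1 / (2 * (‖m‖ + 1)) with hδ
  have hδpos : 0 < δ := by positivity
  refine ⟨min 1 (m.im / 2), by positivity, min (1/2) (δ * (m.im / 2)), by positivity, ?_⟩
  intro w hw
  have hwm2 : ‖w - m‖ ≤ m.im / 2 := hw.trans (min_le_right _ _)
  have him : m.im / 2 ≤ w.im := by
    have h1 : |(w - m).im| ≤ ‖w - m‖ := by
      exact Complex.abs_im_le_norm _
    have h2 : |w.im - m.im| ≤ m.im / 2 := by
      simpa using h1.trans hwm2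
    have := abs_le.mp h2
    linarith [this.1]
  refine ⟨him, fun t ht => ?_⟩
  by_cases hc : t ≤ δ
  · have hwn : ‖w‖ ≤ ‖m‖ + 1 := by
      have h1 : ‖w‖ - ‖m‖ ≤ ‖w - m‖ := norm_sub_norm_le w m
      have h2 : ‖w - m‖ ≤ 1 := hw.trans (min_le_left _ _)
      linarith
    have h1 : ‖(t : ℂ) * w‖ ≤ 1/2 := by
      rw [norm_mul, Complex.norm_real, Real.norm_eq_abs, abs_of_nonneg ht.1]
      calc t * ‖w‖ ≤ δ * (‖m‖ + 1) :=
            mul_le_mul hc hwn (norm_nonneg _) hδpos.le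
        _ = 1/2 := by rw [hδ]; field_simp
    have h2 : (1:ℝ) - ‖(t : ℂ) * w‖ ≤ ‖1 + (t : ℂ) * w‖ := by
      have := norm_add_le (1 + (t : ℂ) * w) (-((t : ℂ) * w))
      simp only [add_neg_cancel_right, norm_neg, norm_one] at this
      linarith
    calc min (1/2) (δ * (m.im / 2)) ≤ 1/2 := min_le_left _ _
      _ ≤ 1 - ‖(t : ℂ) * w‖ := by linarith
      _ ≤ _ := h2
  · push_neg at hc
    have him2 : 0 < w.im := lt_of_lt_of_le (by positivity) him
    have h1 : t * w.im ≤ ‖1 + (t : ℂ) * w‖ := im_lower w him2 t ht.1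
    calc min (1/2) (δ * (m.im / 2)) ≤ δ * (m.im / 2) := min_le_right _ _
      _ ≤ t * w.im := mul_le_mul hc.le him (by positivity) ht.1
      _ ≤ _ := h1

lemma Fdiff {τ : ℝ} (m w : ℂ) {c : ℝ} (hc : 0 < c) (t : ℝ) (ht : t ∈ Set.Icc 0 τ)
    (h1 : c ≤ ‖1 + (t:ℂ)*w‖) (h2 : c ≤ ‖1 + (t:ℂ)*m‖) :
    ‖(t:ℂ)/(1+(t:ℂ)*w) - (t:ℂ)/(1+(t:ℂ)*m)‖ ≤ τ^2/c^2 * ‖w - m‖ := by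
  have hd1 : (1 + (t:ℂ)*w) ≠ 0 := by
    intro h; rw [h] at h1; simp at h1; linarith
  have hd2 : (1 + (t:ℂ)*m) ≠ 0 := by
    intro h; rw [h] at h2; simp at h2; linarith
  have hid : (t:ℂ)/(1+(t:ℂ)*w) - (t:ℂ)/(1+(t:ℂ)*m)
      = (t:ℂ)^2*(m-w)/((1+(t:ℂ)*w)*(1+(t:ℂ)*m)) := by
    field_simp; ring
  rw [hid, norm_div, norm_mul, norm_pow, Complex.norm_real, Real.norm_eq_abs,
    abs_of_nonneg ht.1, norm_sub_rev, norm_mul]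
  have hrw : τ^2/c^2*‖w-m‖ = τ^2*‖w-m‖/(c*c) := by ring
  rw [hrw]
  exact div_le_div₀ (by positivity)
    (mul_le_mul (pow_le_pow_left₀ ht.1 ht.2 2) le_rfl (norm_nonneg _) (by positivity))
    (by positivity) (mul_le_mul h1 h2 hc.le (norm_nonneg _))

end CTDaux

open CTDaux

/-- Companion Stieltjes-transform comparison at sample sizes `n` and `n−1`
(Lemma 4.1, first part).  Here `u p` and `v p` are the companion Stieltjes transforms
at ratios `p/n` and `p/(n−1)` of the MP-type law with population spectral
distribution `H p`, and `m` is the limiting companion Stieltjes transform. -/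
theorem companion_transform_difference (z : ℂ) (hz : 0 < z.im)
    (y τ : ℝ) (hy : 0 < y) (hτ : 0 < τ)
    (Hp : ℕ → Measure ℝ) (H : Measure ℝ)
    [∀ p, IsProbabilityMeasure (Hp p)] [IsProbabilityMeasure H]
    (hHpsupp : ∀ p, Hp p (Set.Icc 0 τ)ᶜ = 0) (hHsupp : H (Set.Icc 0 τ)ᶜ = 0)
    (hweak : ∀ g : BoundedContinuousFunction ℝ ℝ,
      Tendsto (fun p => ∫ t, g t ∂(Hp p)) atTop (nhds (∫ t, g t ∂H)))
    (n : ℕ → ℕ) (hn : ∀ p, 2 ≤ n p)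
    (hratio : Tendsto (fun p : ℕ => (p : ℝ) / (n p : ℝ)) atTop (nhds y))
    (u v : ℕ → ℂ) (hu_im : ∀ p, 0 < (u p).im) (hv_im : ∀ p, 0 < (v p).im)
    (hu : ∀ p, z = -1 / u p +
      ((p : ℂ) / (n p : ℂ)) * ∫ (t : ℝ), (t : ℂ) / (1 + (t : ℂ) * u p) ∂(Hp p))
    (hv : ∀ p, z = -1 / v p +
      ((p : ℂ) / ((n p : ℂ) - 1)) * ∫ (t : ℝ), (t : ℂ) / (1 + (t : ℂ) * v p) ∂(Hp p))
    (m : ℂ) (hm_im : 0 < m.im)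
    (hulim : Tendsto u atTop (nhds m)) (hvlim : Tendsto v atTop (nhds m))
    (hm : z = -1 / m + (y : ℂ) * ∫ (t : ℝ), (t : ℂ) / (1 + (t : ℂ) * m) ∂H)
    (hden : 1 / m ^ 2 -
      (y : ℂ) * (∫ (t : ℝ), (t : ℂ) ^ 2 / (1 + (t : ℂ) * m) ^ 2 ∂H) ≠ 0) :
    Tendsto (fun p => (n p : ℂ) * (u p - v p)) atTop
      (nhds (((y : ℂ) * ∫ (t : ℝ), (t : ℂ) / (1 + (t : ℂ) * m) ∂H) /
        (1 / m ^ 2 - (y : ℂ) * ∫ (t : ℝ), (t : ℂ) ^ 2 / (1 + (t : ℂ) * m) ^ 2 ∂H))) := by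
  -- basic nonzero facts
  have hmne : m ≠ 0 := fun h => by rw [h] at hm_im; simp at hm_im
  have hune : ∀ p, u p ≠ 0 := fun p h => by have := hu_im p; rw [h] at this; simp at this
  have hvne : ∀ p, v p ≠ 0 := fun p h => by have := hv_im p; rw [h] at this; simp at this
  have hn2 : ∀ p, (2:ℝ) ≤ (n p : ℝ) := fun p => by exact_mod_cast hn p
  have hNne : ∀ p, ((n p : ℂ)) ≠ 0 := fun p => by
    exact_mod_cast Nat.cast_ne_zero.mpr (by have := hn p; omega)
  have hN1ne : ∀ p, ((n p : ℂ)) - 1 ≠ 0 := by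
    intro p
    have hcast : ((n p : ℂ)) - 1 = (((n p : ℝ) - 1 : ℝ) : ℂ) := by push_cast; ring
    rw [hcast, Complex.ofReal_ne_zero]
    have := hn2 p; linarith
  -- lower bound data
  obtain ⟨ε, hε, c, hc, hlow⟩ := lower m hm_im τ
  have hlowm := hlow m (by simpa using hε.le)
  -- eventual closeness
  have hev_u : ∀ᶠ p in atTop, ‖u p - m‖ ≤ ε := by
    have := hulim.eventually (Metric.closedBall_mem_nhds m hε)
    filter_upwards [this] with p hp
    simpa [Metric.mem_closedBall, dist_eq_norm] using hp
  have hev_v : ∀ᶠ p in atTop, ‖v p - m‖ ≤ ε := by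
    have := hvlim.eventually (Metric.closedBall_mem_nhds m hε)
    filter_upwards [this] with p hp
    simpa [Metric.mem_closedBall, dist_eq_norm] using hp
  have hnu0 : Tendsto (fun p => ‖u p - m‖) atTop (nhds 0) :=
    tendsto_iff_norm_sub_tendsto_zero.mp hulim
  have hnv0 : Tendsto (fun p => ‖v p - m‖) atTop (nhds 0) :=
    tendsto_iff_norm_sub_tendsto_zero.mp hvlim
  -- T1
  have T1 : Tendsto (fun p => ∫ t, (t:ℂ)/(1+(t:ℂ)*v p) ∂(Hp p)) atTop
      (nhds (∫ t, (t:ℂ)/(1+(t:ℂ)*m) ∂H)) := by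
    have hb : Tendsto (fun p => τ^2/c^2 * ‖v p - m‖) atTop (nhds 0) := by
      simpa using hnv0.const_mul (τ^2/c^2)
    have hbd : ∀ᶠ p in atTop, ∀ t ∈ Set.Icc (0:ℝ) τ,
        ‖(sF (v p) (hv_im p)) t - (sF m hm_im) t‖ ≤ τ^2/c^2 * ‖v p - m‖ := by
      filter_upwards [hev_v] with p hp t ht
      simpa using Fdiff m (v p) hc t ht ((hlow (v p) hp).2 t ht) (hlowm.2 t ht)
    exact tendsto_int hHpsupp hweak (fun p => sF (v p) (hv_im p)) (sF m hm_im) _ hb hbd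
  -- product pointwise
  have hmul : ∀ (w1 w2 : ℂ) (h1 : 0 < w1.im) (h2 : 0 < w2.im) (t : ℝ),
      (sF w1 h1 * sF w2 h2) t = (t:ℂ)^2/((1+(t:ℂ)*w1)*(1+(t:ℂ)*w2)) := by
    intro w1 w2 h1 h2 t
    simp only [BoundedContinuousFunction.coe_mul, Pi.mul_apply, sF_apply]
    rw [div_mul_div_comm, ← pow_two]
  -- T2
  have T2 : Tendsto (fun p => ∫ t, (t:ℂ)^2/((1+(t:ℂ)*u p)*(1+(t:ℂ)*v p)) ∂(Hp p)) atTop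
      (nhds (∫ t, (t:ℂ)^2/(1+(t:ℂ)*m)^2 ∂H)) := by
    have hb : Tendsto (fun p => 2/m.im * (τ^2/c^2) * (‖u p - m‖ + ‖v p - m‖))
        atTop (nhds 0) := by
      simpa using (hnu0.add hnv0).const_mul (2/m.im * (τ^2/c^2))
    have hbd : ∀ᶠ p in atTop, ∀ t ∈ Set.Icc (0:ℝ) τ,
        ‖(sF (u p) (hu_im p) * sF (v p) (hv_im p)) t - (sF m hm_im * sF m hm_im) t‖ ≤
          2/m.im * (τ^2/c^2) * (‖u p - m‖ + ‖v p - m‖) := by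
      filter_upwards [hev_u, hev_v] with p hpu hpv t ht
      have e1 : ‖(sF (u p) (hu_im p)) t - (sF m hm_im) t‖ ≤ τ^2/c^2 * ‖u p - m‖ := by
        simpa using Fdiff m (u p) hc t ht ((hlow (u p) hpu).2 t ht) (hlowm.2 t ht)
      have e2 : ‖(sF (v p) (hv_im p)) t - (sF m hm_im) t‖ ≤ τ^2/c^2 * ‖v p - m‖ := by
        simpa using Fdiff m (v p) hc t ht ((hlow (v p) hpv).2 t ht) (hlowm.2 t ht)
      have hFv : ‖(sF (v p) (hv_im p)) t‖ ≤ 2/m.im := by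
        refine (norm_F_le (v p) (hv_im p) t).trans ?_
        have hvm := (hlow (v p) hpv).1
        rw [div_le_div_iff₀ (hv_im p) hm_im]
        nlinarith
      have hFm : ‖(sF m hm_im) t‖ ≤ 2/m.im := by
        refine (norm_F_le m hm_im t).trans ?_
        rw [div_le_div_iff₀ hm_im hm_im]
        nlinarith
      have key : (sF (u p) (hu_im p) * sF (v p) (hv_im p)) t - (sF m hm_im * sF m hm_im) t
          = ((sF (u p) (hu_im p)) t - (sF m hm_im) t) * (sF (v p) (hv_im p)) t
            + (sF m hm_im) t * ((sF (v p) (hv_im p)) t - (sF m hm_im) t) := by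
        simp only [BoundedContinuousFunction.coe_mul, Pi.mul_apply]; ring
      rw [key]
      calc ‖_ + _‖ ≤ ‖((sF (u p) (hu_im p)) t - (sF m hm_im) t) * (sF (v p) (hv_im p)) t‖
            + ‖(sF m hm_im) t * ((sF (v p) (hv_im p)) t - (sF m hm_im) t)‖ := norm_add_le _ _
        _ ≤ (τ^2/c^2 * ‖u p - m‖) * (2/m.im) + (2/m.im) * (τ^2/c^2 * ‖v p - m‖) := by
            rw [norm_mul, norm_mul]
            exact add_le_add
              (mul_le_mul e1 hFv (norm_nonneg _) (by positivity))
              (mul_le_mul hFm e2 (norm_nonneg _) (by positivity))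
        _ = 2/m.im * (τ^2/c^2) * (‖u p - m‖ + ‖v p - m‖) := by ring
    have hT := tendsto_int hHpsupp hweak
      (fun p => sF (u p) (hu_im p) * sF (v p) (hv_im p)) (sF m hm_im * sF m hm_im) _ hb hbd
    have hcongr : ∀ p, (∫ t, (sF (u p) (hu_im p) * sF (v p) (hv_im p)) t ∂(Hp p))
        = ∫ t, (t:ℂ)^2/((1+(t:ℂ)*u p)*(1+(t:ℂ)*v p)) ∂(Hp p) := by
      intro p
      exact integral_congr_ae (Eventually.of_forall fun t => hmul _ _ _ _ t)
    have hlim : (∫ t, (sF m hm_im * sF m hm_im) t ∂H)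
        = ∫ t, (t:ℂ)^2/(1+(t:ℂ)*m)^2 ∂H := by
      refine integral_congr_ae (Eventually.of_forall fun t => ?_)
      rw [hmul m m hm_im hm_im t, ← pow_two]
    rw [hlim] at hT
    exact hT.congr hcongr
  -- n → ∞
  have hn_top : Tendsto (fun p => (n p : ℝ)) atTop atTop := by
    have hev : ∀ᶠ p : ℕ in atTop, (p:ℝ)/(n p : ℝ) < y + 1 :=
      hratio.eventually (gt_mem_nhds (by linarith : y < y + 1))
    apply tendsto_atTop_mono' atTop ?_
      (Tendsto.atTop_div_const (by linarith : (0:ℝ) < y + 1) tendsto_natCast_atTop_atTop)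
    filter_upwards [hev] with p hp
    have hnp : (0:ℝ) < (n p : ℝ) := by linarith [hn2 p]
    rw [div_le_iff₀ (by linarith : (0:ℝ) < y + 1)]
    have := (div_lt_iff₀ hnp).mp hp
    nlinarith
  -- p/(n-1) → y
  have hq : Tendsto (fun p => (n p : ℝ)/((n p : ℝ) - 1)) atTop (nhds 1) := by
    have h1n : Tendsto (fun p => ((n p : ℝ) - 1)⁻¹) atTop (nhds 0) :=
      tendsto_inv_atTop_zero.comp (tendsto_atTop_add_const_right atTop (-1) hn_top)
    have h2 : Tendsto (fun p => 1 + ((n p : ℝ) - 1)⁻¹) atTop (nhds 1) := by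
      simpa using (tendsto_const_nhds (x := (1:ℝ)) (f := atTop)).add h1n
    refine h2.congr fun p => ?_
    have h3 : (n p : ℝ) - 1 ≠ 0 := by have := hn2 p; intro h; linarith [h]
    field_simp; ring
  have hratio1 : Tendsto (fun p : ℕ => (p:ℝ)/((n p : ℝ) - 1)) atTop (nhds y) := by
    have h0 := hratio.mul hq
    rw [mul_one] at h0
    refine h0.congr fun p => ?_
    have h1 : (n p : ℝ) ≠ 0 := by have := hn2 p; intro h; linarith [h]
    have h3 : (n p : ℝ) - 1 ≠ 0 := by have := hn2 p; intro h; linarith [h]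
    field_simp
  -- complex ratios
  have hrC : Tendsto (fun p : ℕ => (p:ℂ)/(n p : ℂ)) atTop (nhds (y:ℂ)) := by
    have hcast : (fun p : ℕ => (p:ℂ)/(n p : ℂ)) = fun p : ℕ => (((p:ℝ)/(n p : ℝ) : ℝ) : ℂ) := by
      funext p; push_cast; ring
    rw [hcast]
    exact (Complex.continuous_ofReal.tendsto y).comp hratio
  have hr1C : Tendsto (fun p : ℕ => (p:ℂ)/((n p : ℂ) - 1)) atTop (nhds (y:ℂ)) := by
    have hcast : (fun p : ℕ => (p:ℂ)/((n p : ℂ) - 1)) = fun p : ℕ => (((p:ℝ)/((n p : ℝ) - 1) : ℝ) : ℂ) := by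
      funext p; push_cast; ring
    rw [hcast]
    exact (Complex.continuous_ofReal.tendsto y).comp hratio1
  -- limit of D
  have hDlim : Tendsto (fun p => 1/(u p * v p)
        - ((p:ℂ)/(n p : ℂ)) * ∫ t, (t:ℂ)^2/((1+(t:ℂ)*u p)*(1+(t:ℂ)*v p)) ∂(Hp p)) atTop
      (nhds (1/m^2 - (y:ℂ) * ∫ t, (t:ℂ)^2/(1+(t:ℂ)*m)^2 ∂H)) := by
    have h1 : Tendsto (fun p => 1/(u p * v p)) atTop (nhds (1/m^2)) := by
      have := (hulim.mul hvlim).inv₀ (mul_ne_zero hmne hmne)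
      simpa [one_div, pow_two] using this
    exact h1.sub (hrC.mul T2)
  -- key algebraic identity
  have key : ∀ p, (n p : ℂ) * (u p - v p) *
      (1/(u p * v p) - ((p:ℂ)/(n p : ℂ)) * ∫ t, (t:ℂ)^2/((1+(t:ℂ)*u p)*(1+(t:ℂ)*v p)) ∂(Hp p))
      = ((p:ℂ)/((n p : ℂ) - 1)) * ∫ t, (t:ℂ)/(1+(t:ℂ)*v p) ∂(Hp p) := by
    intro p
    have hpt : ∀ t : ℝ, (t:ℂ)/(1+(t:ℂ)*u p) = (t:ℂ)/(1+(t:ℂ)*v p)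
        - (u p - v p) * ((t:ℂ)^2/((1+(t:ℂ)*u p)*(1+(t:ℂ)*v p))) := by
      intro t
      have d1 := one_add_ne (u p) (hu_im p) t
      have d2 := one_add_ne (v p) (hv_im p) t
      field_simp
      ring
    have hi2 : Integrable (fun t : ℝ => (t:ℂ)/(1+(t:ℂ)*v p)) (Hp p) :=
      (sF (v p) (hv_im p)).integrable _
    have hiJ : Integrable (fun t : ℝ => (t:ℂ)^2/((1+(t:ℂ)*u p)*(1+(t:ℂ)*v p))) (Hp p) := by
      have h := (sF (u p) (hu_im p) * sF (v p) (hv_im p)).integrable (Hp p)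
      exact h.congr (Eventually.of_forall fun t => hmul _ _ _ _ t)
    have hI1 : (∫ t, (t:ℂ)/(1+(t:ℂ)*u p) ∂(Hp p))
        = (∫ t, (t:ℂ)/(1+(t:ℂ)*v p) ∂(Hp p))
          - (u p - v p) * ∫ t, (t:ℂ)^2/((1+(t:ℂ)*u p)*(1+(t:ℂ)*v p)) ∂(Hp p) := by
      simp only [hpt]
      rw [integral_sub hi2 (hiJ.const_mul _), integral_const_mul]
    have e := (hu p).symm.trans (hv p)
    rw [hI1] at e
    have ha := hune p
    have hb := hvne p
    have hN := hNne p
    have hN1 := hN1ne p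
    generalize (∫ t, (t:ℂ)/(1+(t:ℂ)*v p) ∂(Hp p)) = A at e ⊢
    generalize (∫ t, (t:ℂ)^2/((1+(t:ℂ)*u p)*(1+(t:ℂ)*v p)) ∂(Hp p)) = J at e ⊢
    field_simp at e ⊢
    linear_combination e
  -- conclude
  have hevne : ∀ᶠ p in atTop, (1/(u p * v p)
      - ((p:ℂ)/(n p : ℂ)) * ∫ t, (t:ℂ)^2/((1+(t:ℂ)*u p)*(1+(t:ℂ)*v p)) ∂(Hp p)) ≠ 0 :=
    hDlim.eventually_ne hden
  have heq : ∀ᶠ p : ℕ in atTop,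
      (((p:ℂ)/((n p : ℂ) - 1)) * ∫ t, (t:ℂ)/(1+(t:ℂ)*v p) ∂(Hp p)) /
        (1/(u p * v p) - ((p:ℂ)/(n p : ℂ)) * ∫ t, (t:ℂ)^2/((1+(t:ℂ)*u p)*(1+(t:ℂ)*v p)) ∂(Hp p))
      = (n p : ℂ) * (u p - v p) := by
    filter_upwards [hevne] with p hp
    rw [div_eq_iff hp]
    exact (key p).symm
  have hfinal := (hr1C.mul T1).div hDlim hden
  exact Filter.Tendsto.congr' heq hfinal
end

section
/- Fix z with Im z > 0, y > 0 and τ > 0. Let H_p (for each p) and H be probability measures on [0, τ] with H_p converging weakly to H, and let n = n(p) satisfy p/n → y as p → ∞. Suppose u_p and v_p lie in the upper half-plane and satisfy z = −1/u_p + (p/n) ∫ t/(1 + t u_p) dH_p(t) and z = −1/v_p + (p/(n−1)) ∫ t/(1 + t v_p) dH_p(t), suppose u_p → m̲ and v_p → m̲ where m̲ lies in the upper half-plane and satisfies z = −1/m̲ + y ∫ t/(1 + t m̲) dH(t), and suppose 1/m̲² − y ∫ t²/(1 + t m̲)² dH(t) ≠ 0. Define m_n and m_{n−1} by u_p = −(1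 − p/n)/z + (p/n) m_n and v_p = −(1 − p/(n−1))/z + (p/(n−1)) m_{n−1}, and set m̲′ = ( 1/m̲² − y ∫ t²/(1 + t m̲)² dH(t) )^{-1}. Then p(m_n − m_{n−1}) → (1 + z m̲)·(m̲ + z m̲′)/(z m̲) as p → ∞. -/
open MeasureTheory Filter
open Topology

lemma den_ne (w : ℂ) (hw : 0 < w.im) (t : ℝ) : (1 : ℂ) + t * w ≠ 0 := by
  rcases eq_or_ne t 0 with ht | ht
  · simp [ht]
  · intro h
    have him : ((1:ℂ) + t * w).im = t * w.im := by simp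
    rw [h] at him
    simp at him
    rcases him with h1 | h2
    · exact ht h1
    · exact absurd h2 (ne_of_gt hw)

lemma norm_den_ge (w : ℂ) (hw : 0 < w.im) (t : ℝ) : |t| * w.im ≤ ‖(1:ℂ) + t * w‖ := by
  have h1 : |t| * w.im = |((1:ℂ) + t*w).im| := by
    simp [abs_mul, abs_of_pos hw]
  rw [h1]
  exact Complex.abs_im_le_norm _

lemma g_bound (w : ℂ) (hw : 0 < w.im) (t : ℝ) : ‖(t:ℂ)/(1 + t*w)‖ ≤ 1/w.im := by
  rcases eq_or_ne t 0 with ht | ht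
  · simp [ht]; positivity
  · rw [norm_div, Complex.norm_real, Real.norm_eq_abs]
    have h1 := norm_den_ge w hw t
    have ht' : 0 < |t| := abs_pos.mpr ht
    calc |t| / ‖(1:ℂ)+t*w‖ ≤ |t| / (|t| * w.im) := by gcongr
      _ = 1/w.im := by rw [div_mul_eq_div_div, div_self (ne_of_gt ht')]

lemma h_bound (w w' : ℂ) (hw : 0 < w.im) (hw' : 0 < w'.im) (t : ℝ) :
    ‖(t:ℂ)^2/((1 + t*w)*(1 + t*w'))‖ ≤ 1/(w.im*w'.im) := by
  rcases eq_or_ne t 0 with ht | ht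
  · simp [ht]; positivity
  · rw [norm_div, norm_mul, norm_pow, Complex.norm_real, Real.norm_eq_abs]
    have h1 := norm_den_ge w hw t
    have h2 := norm_den_ge w' hw' t
    have ht' : 0 < |t| := abs_pos.mpr ht
    calc |t|^2 / (‖(1:ℂ)+t*w‖*‖(1:ℂ)+t*w'‖) ≤ |t|^2 / ((|t| * w.im) * (|t| * w'.im)) := by
          gcongr
      _ = 1/(w.im*w'.im) := by
          rw [show (|t| * w.im) * (|t| * w'.im) = |t|^2 * (w.im * w'.im) by ring,
            div_mul_eq_div_div, div_self (by positivity)]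

lemma t3_bound (w w' w₂ : ℂ) (hw : 0 < w.im) (hw' : 0 < w'.im) (hw₂ : 0 < w₂.im) (t : ℝ) :
    ‖(t:ℂ)^3/((1 + t*w)*(1 + t*w')*(1 + t*w₂))‖ ≤ 1/(w.im*w'.im*w₂.im) := by
  rcases eq_or_ne t 0 with ht | ht
  · simp [ht]; positivity
  · rw [norm_div, norm_mul, norm_mul, norm_pow, Complex.norm_real, Real.norm_eq_abs]
    have h1 := norm_den_ge w hw t
    have h2 := norm_den_ge w' hw' t
    have h3 := norm_den_ge w₂ hw₂ t
    have ht' : 0 < |t| := abs_pos.mpr ht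
    calc |t|^3 / (‖(1:ℂ)+t*w‖*‖(1:ℂ)+t*w'‖*‖(1:ℂ)+t*w₂‖)
        ≤ |t|^3 / ((|t| * w.im) * (|t| * w'.im) * (|t| * w₂.im)) := by gcongr
      _ = 1/(w.im*w'.im*w₂.im) := by
          rw [show (|t| * w.im) * (|t| * w'.im) * (|t| * w₂.im) = |t|^3 * (w.im * w'.im * w₂.im) by ring,
            div_mul_eq_div_div, div_self (by positivity)]

lemma g_diff_eq (w w₂ : ℂ) (hw : 0 < w.im) (hw₂ : 0 < w₂.im) (t : ℝ) :
    (t:ℂ)/(1 + t*w) - (t:ℂ)/(1 + t*w₂)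
      = (w₂ - w) * ((t:ℂ)^2/((1 + t*w)*(1 + t*w₂))) := by
  have h1 := den_ne w hw t
  have h2 := den_ne w₂ hw₂ t
  field_simp
  ring

lemma g_diff_bound (w w₂ : ℂ) (hw : 0 < w.im) (hw₂ : 0 < w₂.im) (t : ℝ) :
    ‖(t:ℂ)/(1 + t*w) - (t:ℂ)/(1 + t*w₂)‖ ≤ ‖w - w₂‖ * (1/(w.im*w₂.im)) := by
  rw [g_diff_eq w w₂ hw hw₂ t, norm_mul, norm_sub_rev]
  exact mul_le_mul_of_nonneg_left (h_bound w w₂ hw hw₂ t) (norm_nonneg _)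

lemma h_diff_eq (w w' w₂ : ℂ) (hw : 0 < w.im) (hw' : 0 < w'.im) (hw₂ : 0 < w₂.im) (t : ℝ) :
    (t:ℂ)^2/((1 + t*w)*(1 + t*w')) - (t:ℂ)^2/((1 + t*w₂)*(1 + t*w'))
      = (w₂ - w) * ((t:ℂ)^3/((1 + t*w)*(1 + t*w')*(1 + t*w₂))) := by
  have h1 := den_ne w hw t
  have h2 := den_ne w' hw' t
  have h3 := den_ne w₂ hw₂ t
  field_simp
  ring

lemma h_diff_bound (w w' w₂ : ℂ) (hw : 0 < w.im) (hw' : 0 < w'.im) (hw₂ : 0 < w₂.im) (t : ℝ) :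
    ‖(t:ℂ)^2/((1 + t*w)*(1 + t*w')) - (t:ℂ)^2/((1 + t*w₂)*(1 + t*w'))‖
      ≤ ‖w - w₂‖ * (1/(w.im*w'.im*w₂.im)) := by
  rw [h_diff_eq w w' w₂ hw hw' hw₂ t, norm_mul, norm_sub_rev]
  exact mul_le_mul_of_nonneg_left (t3_bound w w' w₂ hw hw' hw₂ t) (norm_nonneg _)

lemma g_cont (w : ℂ) (hw : 0 < w.im) : Continuous (fun t : ℝ => (t:ℂ)/(1 + t*w)) :=
  Continuous.div (Complex.continuous_ofReal)
    (continuous_const.add (Complex.continuous_ofReal.mul continuous_const))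
    (fun t => den_ne w hw t)

lemma h_cont (w w' : ℂ) (hw : 0 < w.im) (hw' : 0 < w'.im) :
    Continuous (fun t : ℝ => (t:ℂ)^2/((1 + t*w)*(1 + t*w'))) :=
  Continuous.div (by continuity)
    (((continuous_const.add (Complex.continuous_ofReal.mul continuous_const))).mul
      ((continuous_const.add (Complex.continuous_ofReal.mul continuous_const))))
    (fun t => mul_ne_zero (den_ne w hw t) (den_ne w' hw' t))

lemma g_int (μ : Measure ℝ) [IsProbabilityMeasure μ] (w : ℂ) (hw : 0 < w.im) :
    Integrable (fun t : ℝ => (t:ℂ)/(1 + t*w)) μ :=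
  (integrable_const (1/w.im)).mono' (g_cont w hw).aestronglyMeasurable
    (ae_of_all _ (g_bound w hw))

lemma h_int (μ : Measure ℝ) [IsProbabilityMeasure μ] (w w' : ℂ) (hw : 0 < w.im)
    (hw' : 0 < w'.im) :
    Integrable (fun t : ℝ => (t:ℂ)^2/((1 + t*w)*(1 + t*w'))) μ :=
  (integrable_const (1/(w.im*w'.im))).mono' (h_cont w w' hw hw').aestronglyMeasurable
    (ae_of_all _ (h_bound w w' hw hw'))

lemma weak_cplx (Hp : ℕ → Measure ℝ) (H : Measure ℝ)
    [∀ p, IsProbabilityMeasure (Hp p)] [IsProbabilityMeasure H]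
    (hweak : ∀ g : BoundedContinuousFunction ℝ ℝ,
      Tendsto (fun p => ∫ t, g t ∂(Hp p)) atTop (nhds (∫ t, g t ∂H)))
    (f : ℝ → ℂ) (hf : Continuous f) (C : ℝ) (hbd : ∀ t, ‖f t‖ ≤ C) :
    Tendsto (fun p => ∫ t, f t ∂(Hp p)) atTop (nhds (∫ t, f t ∂H)) := by
  have hint : ∀ (μ : Measure ℝ) [IsProbabilityMeasure μ], Integrable f μ := fun μ _ =>
    (integrable_const C).mono' hf.aestronglyMeasurable (ae_of_all _ hbd)
  set fr : BoundedContinuousFunction ℝ ℝ :=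
    BoundedContinuousFunction.ofNormedAddCommGroup (fun t => (f t).re)
      (Complex.continuous_re.comp hf) C
      (fun t => (Complex.abs_re_le_norm (f t)).trans (hbd t)) with hfr
  set fi : BoundedContinuousFunction ℝ ℝ :=
    BoundedContinuousFunction.ofNormedAddCommGroup (fun t => (f t).im)
      (Complex.continuous_im.comp hf) C
      (fun t => (Complex.abs_im_le_norm (f t)).trans (hbd t)) with hfi
  have key : ∀ (μ : Measure ℝ) [IsProbabilityMeasure μ],
      ∫ t, f t ∂μ = ((∫ t, fr t ∂μ : ℝ) : ℂ) + ((∫ t, fi t ∂μ : ℝ) : ℂ) * Complex.I := by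
    intro μ _
    have hre : ∫ t, fr t ∂μ = (∫ t, f t ∂μ).re := by
      exact integral_re (hint μ)
    have him : ∫ t, fi t ∂μ = (∫ t, f t ∂μ).im := by
      exact integral_im (hint μ)
    rw [hre, him, Complex.re_add_im]
  have h1 := hweak fr
  have h2 := hweak fi
  simp only [key]
  exact ((Complex.continuous_ofReal.tendsto _).comp h1).add
    (((Complex.continuous_ofReal.tendsto _).comp h2).mul_const Complex.I)

lemma key_alg (a b N P A B C : ℂ) (ha : a ≠ 0) (hb : b ≠ 0) (hN : N ≠ 0) (hN1 : N - 1 ≠ 0)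
    (hA : A = B + (b - a)*C)
    (h1 : -1/a + (P/N)*A = -1/b + (P/(N-1))*B) :
    N*(a - b) * (1/(a*b) - (P/N)*C) = (P/(N-1))*B := by
  subst hA
  field_simp at h1 ⊢
  linear_combination h1

set_option maxHeartbeats 2000000 in
/-- Lemma 4.1: `p (m_n − m_{n−1}) → (1 + z m̲)(m̲ + z m̲′)/(z m̲)`, where `m_n`, `m_{n−1}`
are the Stieltjes transforms corresponding to ratios `p/n` and `p/(n−1)` and `m̲′` is
the explicit value of the derivative of the limiting companion Stieltjes transform. -/
theorem stieltjes_transform_difference_limit (z : ℂ) (hz : 0 < z.im)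
    (y τ : ℝ) (hy : 0 < y) (hτ : 0 < τ)
    (Hp : ℕ → Measure ℝ) (H : Measure ℝ)
    [∀ p, IsProbabilityMeasure (Hp p)] [IsProbabilityMeasure H]
    (hHpsupp : ∀ p, Hp p (Set.Icc 0 τ)ᶜ = 0) (hHsupp : H (Set.Icc 0 τ)ᶜ = 0)
    (hweak : ∀ g : BoundedContinuousFunction ℝ ℝ,
      Tendsto (fun p => ∫ t, g t ∂(Hp p)) atTop (nhds (∫ t, g t ∂H)))
    (n : ℕ → ℕ) (hn : ∀ p, 2 ≤ n p)
    (hratio : Tendsto (fun p : ℕ => (p : ℝ) / (n p : ℝ)) atTop (nhds y))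
    (u v : ℕ → ℂ) (hu_im : ∀ p, 0 < (u p).im) (hv_im : ∀ p, 0 < (v p).im)
    (hu : ∀ p, z = -1 / u p +
      ((p : ℂ) / (n p : ℂ)) * ∫ (t : ℝ), (t : ℂ) / (1 + (t : ℂ) * u p) ∂(Hp p))
    (hv : ∀ p, z = -1 / v p +
      ((p : ℂ) / ((n p : ℂ) - 1)) * ∫ (t : ℝ), (t : ℂ) / (1 + (t : ℂ) * v p) ∂(Hp p))
    (m : ℂ) (hm_im : 0 < m.im)
    (hulim : Tendsto u atTop (nhds m)) (hvlim : Tendsto v atTop (nhds m))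
    (hm : z = -1 / m + (y : ℂ) * ∫ (t : ℝ), (t : ℂ) / (1 + (t : ℂ) * m) ∂H)
    (hden : 1 / m ^ 2 -
      (y : ℂ) * (∫ (t : ℝ), (t : ℂ) ^ 2 / (1 + (t : ℂ) * m) ^ 2 ∂H) ≠ 0)
    (mn mn1 : ℕ → ℂ)
    (hmn : ∀ p, u p = -(1 - (p : ℂ) / (n p : ℂ)) / z + ((p : ℂ) / (n p : ℂ)) * mn p)
    (hmn1 : ∀ p, v p = -(1 - (p : ℂ) / ((n p : ℂ) - 1)) / z +
      ((p : ℂ) / ((n p : ℂ) - 1)) * mn1 p)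
    (m' : ℂ)
    (hm' : m' = (1 / m ^ 2 -
      (y : ℂ) * ∫ (t : ℝ), (t : ℂ) ^ 2 / (1 + (t : ℂ) * m) ^ 2 ∂H)⁻¹) :
    Tendsto (fun p : ℕ => (p : ℂ) * (mn p - mn1 p)) atTop
      (nhds ((1 + z * m) * (m + z * m') / (z * m))) := by
  -- nonvanishing basics
  have hz0 : z ≠ 0 := fun h => by simp [h] at hz
  have hm0 : m ≠ 0 := fun h => by simp [h] at hm_im
  have hu0 : ∀ p, u p ≠ 0 := fun p h => by have := hu_im p; simp [h] at this
  have hv0 : ∀ p, v p ≠ 0 := fun p h => by have := hv_im p; simp [h] at this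
  have hN0 : ∀ p, (n p : ℂ) ≠ 0 := fun p => by
    have := hn p; exact_mod_cast Nat.cast_ne_zero.mpr (by omega)
  have hN1 : ∀ p, (n p : ℂ) - 1 ≠ 0 := fun p => by
    have h2 := hn p
    have : (n p : ℂ) ≠ 1 := by exact_mod_cast (by omega : n p ≠ 1)
    exact sub_ne_zero.mpr this
  -- names for integrals
  set B : ℕ → ℂ := fun p => ∫ t : ℝ, (t:ℂ)/(1 + t*(v p)) ∂(Hp p) with hB_def
  set Cq : ℕ → ℂ := fun p => ∫ t : ℝ, (t:ℂ)^2/((1 + t*(u p))*(1 + t*(v p))) ∂(Hp p) with hC_def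
  set I1 : ℂ := ∫ t : ℝ, (t:ℂ)/(1 + t*m) ∂H with hI1_def
  set I2 : ℂ := ∫ t : ℝ, (t:ℂ)^2/((1 + t*m)*(1 + t*m)) ∂H with hI2_def
  have hI2eq : (∫ t : ℝ, (t:ℂ)^2/(1 + (t:ℂ)*m)^2 ∂H) = I2 := by
    rw [hI2_def]; congr 1; funext t; rw [pow_two (1 + (t:ℂ)*m)]
  set D : ℂ := 1/m^2 - (y:ℂ)*I2 with hD_def
  have hD : D ≠ 0 := by rw [hD_def, ← hI2eq]; exact hden
  have hm'D : m' = D⁻¹ := by rw [hm', hI2eq, ← hD_def]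
  -- the key algebraic identity
  have key : ∀ p, (n p : ℂ)*(u p - v p) * (1/(u p * v p) - ((p:ℂ)/(n p : ℂ))*Cq p)
      = ((p:ℂ)/((n p : ℂ)-1)) * B p := by
    intro p
    have hiu := hu_im p
    have hiv := hv_im p
    have hA : (∫ t : ℝ, (t:ℂ)/(1 + t*(u p)) ∂(Hp p)) = B p + (v p - u p) * Cq p := by
      have hsub : (∫ t : ℝ, (t:ℂ)/(1 + t*(u p)) ∂(Hp p)) - B p
          = ∫ t : ℝ, ((t:ℂ)/(1 + t*(u p)) - (t:ℂ)/(1 + t*(v p))) ∂(Hp p) :=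
        (integral_sub (g_int _ _ hiu) (g_int _ _ hiv)).symm
      have hcong : (∫ t : ℝ, ((t:ℂ)/(1 + t*(u p)) - (t:ℂ)/(1 + t*(v p))) ∂(Hp p))
          = ∫ t : ℝ, (v p - u p) * ((t:ℂ)^2/((1 + t*(u p))*(1 + t*(v p)))) ∂(Hp p) :=
        integral_congr_ae (ae_of_all _ fun t => g_diff_eq _ _ hiu hiv t)
      have hmul : (∫ t : ℝ, (v p - u p) * ((t:ℂ)^2/((1 + t*(u p))*(1 + t*(v p)))) ∂(Hp p))
          = (v p - u p) * Cq p := integral_const_mul _ _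
      linear_combination hsub + hcong + hmul
    have heq : -1/(u p) + ((p:ℂ)/(n p : ℂ))*(∫ t : ℝ, (t:ℂ)/(1 + t*(u p)) ∂(Hp p))
        = -1/(v p) + ((p:ℂ)/((n p : ℂ)-1))*(B p) := (hu p).symm.trans (hv p)
    rw [hA] at heq
    exact key_alg (u p) (v p) (n p : ℂ) (p : ℂ) _ (B p) (Cq p)
      (hu0 p) (hv0 p) (hN0 p) (hN1 p) rfl heq
  -- ratio limits
  have hnR : Tendsto (fun p => (n p : ℝ)) atTop atTop := by
    have hdiv : Tendsto (fun p : ℕ => (p:ℝ)/(y+1)) atTop atTop :=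
      (tendsto_natCast_atTop_atTop).atTop_div_const (by linarith)
    refine tendsto_atTop_mono' _ ?_ hdiv
    filter_upwards [hratio.eventually (gt_mem_nhds (show y < y + 1 by linarith))] with p hp
    have hnp : (0:ℝ) < (n p : ℝ) := by exact_mod_cast Nat.lt_of_lt_of_le Nat.zero_lt_two (hn p)
    rw [div_le_iff₀ (by linarith : (0:ℝ) < y + 1)]
    have h2 := (div_lt_iff₀ hnp).mp hp
    nlinarith
  have hpnC : Tendsto (fun p : ℕ => (p:ℂ)/(n p : ℂ)) atTop (nhds (y:ℂ)) := by
    have := (Complex.continuous_ofReal.tendsto y).comp hratio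
    refine this.congr fun p => ?_
    simp only [Function.comp_apply]
    push_cast
    ring
  have hpn1C : Tendsto (fun p : ℕ => (p:ℂ)/((n p : ℂ)-1)) atTop (nhds (y:ℂ)) := by
    have hinv : Tendsto (fun p : ℕ => 1/((n p : ℝ)-1)) atTop (nhds 0) := by
      simp only [one_div]
      exact tendsto_inv_atTop_zero.comp (tendsto_atTop_add_const_right _ (-1) hnR)
    have hr1 : Tendsto (fun p : ℕ => (p:ℝ)/((n p : ℝ)-1)) atTop (nhds y) := by
      have h2 := hratio.add (hratio.mul hinv)
      simp only [mul_zero, add_zero] at h2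
      refine h2.congr fun p => ?_
      have e0 : (n p : ℝ) ≠ 0 := by
        have := hn p; positivity
      have e1 : (n p : ℝ) - 1 ≠ 0 := by
        have h3 : (2:ℝ) ≤ (n p : ℝ) := by exact_mod_cast hn p
        intro h; linarith
      field_simp
      ring
    have := (Complex.continuous_ofReal.tendsto y).comp hr1
    refine this.congr fun p => ?_
    simp only [Function.comp_apply]
    push_cast
    ring
  -- integral limits
  have hvim : ∀ᶠ p in atTop, m.im/2 ≤ (v p).im := by
    have h1 : Tendsto (fun p => (v p).im) atTop (nhds m.im) :=
      (Complex.continuous_im.tendsto m).comp hvlim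
    filter_upwards [h1.eventually (lt_mem_nhds (show m.im/2 < m.im by linarith))] with p hp
    exact hp.le
  have huim : ∀ᶠ p in atTop, m.im/2 ≤ (u p).im := by
    have h1 : Tendsto (fun p => (u p).im) atTop (nhds m.im) :=
      (Complex.continuous_im.tendsto m).comp hulim
    filter_upwards [h1.eventually (lt_mem_nhds (show m.im/2 < m.im by linarith))] with p hp
    exact hp.le
  have hB : Tendsto B atTop (nhds I1) := by
    have hgm : Tendsto (fun p : ℕ => ∫ t : ℝ, (t:ℂ)/(1 + t*m) ∂(Hp p)) atTop (nhds I1) :=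
      weak_cplx Hp H hweak _ (g_cont m hm_im) (1/m.im) (g_bound m hm_im)
    have hBdiff : Tendsto (fun p : ℕ => B p - ∫ t : ℝ, (t:ℂ)/(1 + t*m) ∂(Hp p))
        atTop (nhds 0) := by
      rw [tendsto_zero_iff_norm_tendsto_zero]
      have hb0 : Tendsto (fun p : ℕ => ‖v p - m‖ * (1/((m.im/2)*m.im))) atTop (nhds 0) := by
        have h2 := (tendsto_iff_norm_sub_tendsto_zero.mp hvlim).mul_const (1/((m.im/2)*m.im))
        simpa using h2
      refine squeeze_zero' (Eventually.of_forall fun p => norm_nonneg _) ?_ hb0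
      filter_upwards [hvim] with p hp
      have hsub : B p - (∫ t : ℝ, (t:ℂ)/(1 + t*m) ∂(Hp p))
          = ∫ t : ℝ, ((t:ℂ)/(1 + t*(v p)) - (t:ℂ)/(1 + t*m)) ∂(Hp p) :=
        (integral_sub (g_int _ _ (hv_im p)) (g_int _ _ hm_im)).symm
      rw [hsub]
      have hle : ∀ t : ℝ, ‖(t:ℂ)/(1 + t*(v p)) - (t:ℂ)/(1 + t*m)‖
          ≤ ‖v p - m‖ * (1/((m.im/2)*m.im)) := by
        intro t
        refine (g_diff_bound (v p) m (hv_im p) hm_im t).trans ?_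
        have h0 : 0 < (m.im/2)*m.im := mul_pos (half_pos hm_im) hm_im
        have h1 : (m.im/2)*m.im ≤ (v p).im * m.im := mul_le_mul_of_nonneg_right hp hm_im.le
        have h2 := one_div_le_one_div_of_le h0 h1
        exact mul_le_mul_of_nonneg_left h2 (norm_nonneg _)
      have h3 := norm_integral_le_of_norm_le_const (μ := Hp p) (ae_of_all _ hle)
      simpa using h3
    have h4 := hBdiff.add hgm
    rw [zero_add] at h4
    refine h4.congr fun p => ?_
    ring
  have hC : Tendsto Cq atTop (nhds I2) := by
    have hhm : Tendsto (fun p : ℕ => ∫ t : ℝ, (t:ℂ)^2/((1 + t*m)*(1 + t*m)) ∂(Hp p))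
        atTop (nhds I2) :=
      weak_cplx Hp H hweak _ (h_cont m m hm_im hm_im) (1/(m.im*m.im)) (h_bound m m hm_im hm_im)
    set K : ℝ := 1/((m.im/2)*(m.im/2)*m.im) with hK_def
    have hCdiff : Tendsto (fun p : ℕ => Cq p - ∫ t : ℝ, (t:ℂ)^2/((1 + t*m)*(1 + t*m)) ∂(Hp p))
        atTop (nhds 0) := by
      rw [tendsto_zero_iff_norm_tendsto_zero]
      have hb0 : Tendsto (fun p : ℕ => (‖u p - m‖ + ‖v p - m‖) * K) atTop (nhds 0) := by
        have h2 := ((tendsto_iff_norm_sub_tendsto_zero.mp hulim).add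
          (tendsto_iff_norm_sub_tendsto_zero.mp hvlim)).mul_const K
        simpa using h2
      refine squeeze_zero' (Eventually.of_forall fun p => norm_nonneg _) ?_ hb0
      filter_upwards [huim, hvim] with p hpu hpv
      have hsub : Cq p - (∫ t : ℝ, (t:ℂ)^2/((1 + t*m)*(1 + t*m)) ∂(Hp p))
          = ∫ t : ℝ, ((t:ℂ)^2/((1 + t*(u p))*(1 + t*(v p)))
              - (t:ℂ)^2/((1 + t*m)*(1 + t*m))) ∂(Hp p) :=
        (integral_sub (h_int _ _ _ (hu_im p) (hv_im p)) (h_int _ _ _ hm_im hm_im)).symm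
      rw [hsub]
      have h0 : 0 < (m.im/2)*(m.im/2)*m.im :=
        mul_pos (mul_pos (half_pos hm_im) (half_pos hm_im)) hm_im
      have hle : ∀ t : ℝ, ‖(t:ℂ)^2/((1 + t*(u p))*(1 + t*(v p)))
          - (t:ℂ)^2/((1 + t*m)*(1 + t*m))‖ ≤ (‖u p - m‖ + ‖v p - m‖) * K := by
        intro t
        have e1 := h_diff_bound (u p) (v p) m (hu_im p) (hv_im p) hm_im t
        have e2 := h_diff_bound (v p) m m (hv_im p) hm_im hm_im t
        rw [mul_comm ((1:ℂ) + (t:ℂ)*(v p)) (1 + (t:ℂ)*m)] at e2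
        have tri : ‖(t:ℂ)^2/((1 + t*(u p))*(1 + t*(v p))) - (t:ℂ)^2/((1 + t*m)*(1 + t*m))‖
            ≤ ‖(t:ℂ)^2/((1 + t*(u p))*(1 + t*(v p))) - (t:ℂ)^2/((1 + t*m)*(1 + t*(v p)))‖
              + ‖(t:ℂ)^2/((1 + t*m)*(1 + t*(v p))) - (t:ℂ)^2/((1 + t*m)*(1 + t*m))‖ :=
          norm_sub_le_norm_sub_add_norm_sub _ _ _
        refine tri.trans ?_
        have c1 : 1/((u p).im*(v p).im*m.im) ≤ K := by
          rw [hK_def]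
          apply one_div_le_one_div_of_le h0
          have := hm_im
          gcongr <;> linarith
        have c2 : 1/((v p).im*m.im*m.im) ≤ K := by
          rw [hK_def]
          apply one_div_le_one_div_of_le h0
          have := hm_im
          gcongr <;> linarith
        have b1 := e1.trans (mul_le_mul_of_nonneg_left c1 (norm_nonneg (u p - m)))
        have b2 := e2.trans (mul_le_mul_of_nonneg_left c2 (norm_nonneg (v p - m)))
        calc _ ≤ ‖u p - m‖ * K + ‖v p - m‖ * K := add_le_add b1 b2
          _ = (‖u p - m‖ + ‖v p - m‖) * K := by ring
      have h3 := norm_integral_le_of_norm_le_const (μ := Hp p) (ae_of_all _ hle)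
      simpa using h3
    have h4 := hCdiff.add hhm
    rw [zero_add] at h4
    refine h4.congr fun p => ?_
    ring
  -- denominator limit
  have hDp : Tendsto (fun p => 1/(u p * v p) - ((p:ℂ)/(n p : ℂ))*Cq p) atTop (nhds D) := by
    have h1 : Tendsto (fun p => 1/(u p * v p)) atTop (nhds (1/(m*m))) :=
      tendsto_const_nhds.div (hulim.mul hvlim) (mul_ne_zero hm0 hm0)
    have := h1.sub (hpnC.mul hC)
    rw [hD_def]
    convert this using 2
    rw [pow_two]
  -- n (u - v) limit
  have hNuv : Tendsto (fun p => (n p : ℂ)*(u p - v p)) atTop (nhds ((y:ℂ)*I1/D)) := by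
    have hq : Tendsto (fun p : ℕ => ((p:ℂ)/((n p : ℂ)-1)) * B p /
        (1/(u p * v p) - ((p:ℂ)/(n p : ℂ))*Cq p)) atTop (nhds ((y:ℂ)*I1/D)) :=
      (hpn1C.mul hB).div hDp hD
    refine Tendsto.congr' ?_ hq
    filter_upwards [hDp.eventually_ne hD] with p hp
    rw [← key p, mul_div_assoc, div_self hp, mul_one]
  -- decompose the target sequence
  have hfun : (fun p : ℕ => (p:ℂ)*(mn p - mn1 p))
      = fun p => (n p : ℂ)*(u p - v p) + v p + 1/z := by
    funext p
    have e0 : (n p : ℂ) ≠ 0 := hN0 p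
    have e1 : (n p : ℂ) - 1 ≠ 0 := hN1 p
    have a1 : (p:ℂ) * mn p = (n p : ℂ) * u p + ((n p : ℂ) - p)/z := by
      rw [hmn p]; field_simp; ring
    have a2 : (p:ℂ) * mn1 p = ((n p : ℂ) - 1) * v p + ((n p : ℂ) - 1 - p)/z := by
      rw [hmn1 p]; field_simp; ring
    linear_combination a1 - a2
  rw [hfun]
  have hlim := (hNuv.add hvlim).add (tendsto_const_nhds : Tendsto (fun _ : ℕ => 1/z) atTop _)
  convert hlim using 2
  -- value identity
  have hyI : (y:ℂ)*I1 = z + 1/m := by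
    linear_combination -hm
  rw [hyI, hm'D]
  field_simp
  ring
end
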